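/- arXiv:1009.4065 — 2 statements merged into one kernel-verified Lean document; each statement's English description precedes it below -/
import Mathlib

section
/- Let Q be the quiver Ã_{p,q} and let d₁, d₂ : Q₁ → ℤ be two gradings. Then d₁ and d₂ are equivalent (i.e. there exists r : Q₀ → ℤ with d₂(a) = d₁(a) + r(t(a)) − r(s(a)) for all arrows a) if and only if w(d₁) = w(d₂), where w(d) = Σ_{i=1}^{p} d(a_i) − Σ_{j=1}^{q} d(b_j). -/
/-- Source map of the quiver `Ã_{p,q}` (vertices `0, …, p+q-1` in `ZMod (p+q)`). -/
def srcA (p q : ℕ) : Fin p ⊕ Fin q → ZMod (p + q)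
  | Sum.inl i => ((i : ℕ) : ZMod (p + q))
  | Sum.inr j => ((p + (j : ℕ) + 1 : ℕ) : ZMod (p + q))

/-- Target map of the quiver `Ã_{p,q}`. -/
def tgtA (p q : ℕ) : Fin p ⊕ Fin q → ZMod (p + q)
  | Sum.inl i => (((i : ℕ) + 1 : ℕ) : ZMod (p + q))
  | Sum.inr j => ((p + (j : ℕ) : ℕ) : ZMod (p + q))

/-- The weight of a grading `d` on `Ã_{p,q}`: `Σ d(aᵢ) - Σ d(bⱼ)`. -/
def wtA (p q : ℕ) (d : Fin p ⊕ Fin q → ℤ) : ℤ :=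
  (∑ i : Fin p, d (Sum.inl i)) - ∑ j : Fin q, d (Sum.inr j)

/-- two gradings on `Ã_{p,q}` are equivalent iff they have the same weight. -/
theorem graded_equiv_iff_weight_eq (p q : ℕ) (hp : 1 ≤ p) (hq : 1 ≤ q)
    (d₁ d₂ : Fin p ⊕ Fin q → ℤ) :
    (∃ r : ZMod (p + q) → ℤ, ∀ a, d₂ a = d₁ a + (r (tgtA p q a) - r (srcA p q a))) ↔
      wtA p q d₁ = wtA p q d₂ := by
  haveI : NeZero (p + q) := ⟨by omega⟩
  constructor
  · rintro ⟨r, hr⟩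
    set g : ℕ → ℤ := fun k => r ((k : ℕ) : ZMod (p + q)) with hg
    have ha : ∀ i : Fin p, d₂ (Sum.inl i) - d₁ (Sum.inl i) = g ((i : ℕ) + 1) - g (i : ℕ) := by
      intro i
      rw [hr (Sum.inl i)]
      simp only [srcA, tgtA, hg]
      push_cast
      ring
    have hb : ∀ j : Fin q, d₂ (Sum.inr j) - d₁ (Sum.inr j)
        = g (p + (j : ℕ)) - g (p + (j : ℕ) + 1) := by
      intro j
      rw [hr (Sum.inr j)]
      simp only [srcA, tgtA, hg]
      push_cast
      ring
    have h1 : ∑ i : Fin p, (d₂ (Sum.inl i) - d₁ (Sum.inl i)) = g p - g 0 := by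
      rw [Finset.sum_congr rfl (fun i _ => ha i),
        Fin.sum_univ_eq_sum_range (fun k => g (k + 1) - g k) p, Finset.sum_range_sub]
    have h2 : ∑ j : Fin q, (d₂ (Sum.inr j) - d₁ (Sum.inr j)) = g p - g (p + q) := by
      rw [Finset.sum_congr rfl (fun j _ => hb j),
        Fin.sum_univ_eq_sum_range (fun k => g (p + k) - g (p + k + 1)) q]
      have := Finset.sum_range_sub (fun k => g (p + k)) q
      have : ∑ k ∈ Finset.range q, (g (p + k) - g (p + k + 1))
          = -∑ k ∈ Finset.range q, (g (p + (k + 1)) - g (p + k)) := by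
        rw [← Finset.sum_neg_distrib]
        refine Finset.sum_congr rfl fun k _ => ?_
        ring
      rw [this, Finset.sum_range_sub (fun k => g (p + k)) q]
      ring
    have hgpq : g (p + q) = g 0 := by
      simp [hg, ZMod.natCast_self]
    rw [Finset.sum_sub_distrib] at h1 h2
    unfold wtA
    rw [hgpq] at h2
    linarith
  · intro hw
    -- the difference grading, made total on ℕ
    set A : ℕ → ℤ := fun i => if h : i < p then d₂ (Sum.inl ⟨i, h⟩) - d₁ (Sum.inl ⟨i, h⟩) else 0
      with hA
    set B : ℕ → ℤ := fun j => if h : j < q then d₂ (Sum.inr ⟨j, h⟩) - d₁ (Sum.inr ⟨j, h⟩) else 0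
      with hB
    have hw0 : (∑ i ∈ Finset.range p, A i) - ∑ j ∈ Finset.range q, B j = 0 := by
      have e1 : ∑ i ∈ Finset.range p, A i
          = ∑ i : Fin p, (d₂ (Sum.inl i) - d₁ (Sum.inl i)) := by
        rw [← Fin.sum_univ_eq_sum_range A p]
        refine Finset.sum_congr rfl fun i _ => ?_
        simp [hA, i.isLt]
      have e2 : ∑ j ∈ Finset.range q, B j
          = ∑ j : Fin q, (d₂ (Sum.inr j) - d₁ (Sum.inr j)) := by
        rw [← Fin.sum_univ_eq_sum_range B q]
        refine Finset.sum_congr rfl fun j _ => ?_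
        simp [hB, j.isLt]
      rw [e1, e2, Finset.sum_sub_distrib, Finset.sum_sub_distrib]
      unfold wtA at hw
      linarith
    -- the potential
    set f : ℕ → ℤ := fun k => (∑ i ∈ Finset.range (min k p), A i)
      - ∑ j ∈ Finset.range (k - p), B j with hf
    refine ⟨fun v => f v.val, ?_⟩
    rintro (i | j)
    · have hi : (i : ℕ) < p := i.isLt
      have hv1 : ((((i : ℕ) + 1 : ℕ) : ZMod (p + q))).val = (i : ℕ) + 1 :=
        ZMod.val_cast_of_lt (by omega)
      have hv0 : (((i : ℕ) : ZMod (p + q))).val = (i : ℕ) :=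
        ZMod.val_cast_of_lt (by omega)
      simp only [srcA, tgtA, hv1, hv0]
      have hmin1 : min ((i : ℕ) + 1) p = (i : ℕ) + 1 := by omega
      have hmin0 : min (i : ℕ) p = (i : ℕ) := by omega
      have hs1 : (i : ℕ) + 1 - p = 0 := by omega
      have hs0 : (i : ℕ) - p = 0 := by omega
      simp only [hf, hmin1, hmin0, hs1, hs0, Finset.range_zero, Finset.sum_empty,
        Finset.sum_range_succ, sub_zero]
      have : A (i : ℕ) = d₂ (Sum.inl i) - d₁ (Sum.inl i) := by
        simp [hA, hi]
      rw [this]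
      ring
    · have hj : (j : ℕ) < q := j.isLt
      have hvt : (((p + (j : ℕ) : ℕ) : ZMod (p + q))).val = p + (j : ℕ) :=
        ZMod.val_cast_of_lt (by omega)
      have hBj : B (j : ℕ) = d₂ (Sum.inr j) - d₁ (Sum.inr j) := by
        simp [hB, hj]
      rcases lt_or_eq_of_le (Nat.succ_le_of_lt hj) with h | h
      · -- j + 1 < q : generic case
        have hvs : (((p + (j : ℕ) + 1 : ℕ) : ZMod (p + q))).val = p + (j : ℕ) + 1 :=
          ZMod.val_cast_of_lt (by omega)
        simp only [srcA, tgtA, hvt, hvs]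
        have hm1 : min (p + (j : ℕ)) p = p := by omega
        have hm2 : min (p + (j : ℕ) + 1) p = p := by omega
        have hr1 : p + (j : ℕ) - p = (j : ℕ) := by omega
        have hr2 : p + (j : ℕ) + 1 - p = (j : ℕ) + 1 := by omega
        simp only [hf, hm1, hm2, hr1, hr2, Finset.sum_range_succ]
        rw [hBj]
        ring
      · -- j + 1 = q : the wrap-around arrow
        have hvs : (((p + (j : ℕ) + 1 : ℕ) : ZMod (p + q))).val = 0 := by
          have : ((p + (j : ℕ) + 1 : ℕ) : ZMod (p + q)) = 0 := by
            have : p + (j : ℕ) + 1 = p + q := by omega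
            rw [this]
            exact_mod_cast ZMod.natCast_self (p + q)
          rw [this, ZMod.val_zero]
        simp only [srcA, tgtA, hvt, hvs]
        have hm1 : min (p + (j : ℕ)) p = p := by omega
        have hr1 : p + (j : ℕ) - p = (j : ℕ) := by omega
        have hm0 : min 0 p = 0 := by omega
        have hr0 : 0 - p = 0 := by omega
        simp only [hf, hm1, hr1, hm0, hr0, Finset.range_zero, Finset.sum_empty, sub_zero]
        have hq' : q = (j : ℕ) + 1 := h.symm
        rw [hq', Finset.sum_range_succ, hBj] at hw0
        linarith
end

section
/- Let Q be the quiver Ã_{p,p} and let σ be the quiver automorphism fixing the vertices 1 and p+1 and interchanging vertex i with vertex 2p+2−i for 2 ≤ i ≤ p, which interchanges the arrow a_i with the arrow b_i for each i. Then for any grading d : Q₁ → ℤ one has w(d ∘ σ) = −w(d). Consequently, two gradings d₁, d₂ on Ã_{p,p} are equivalent up to an automorphism of Q if and only if |w(d₁)| = |w(d₂)|. -/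
/-- The nontrivial automorphism `σ` of `Ã_{p,p}` on arrows: it interchanges the
`p`-arrow `aᵢ` with the `q`-arrow `bᵢ` (in reversed order, corresponding to the
vertex map `v ↦ -v` fixing the vertices `0` and `p`). -/
def sigmaA (p : ℕ) : Fin p ⊕ Fin p → Fin p ⊕ Fin p
  | Sum.inl i => Sum.inr i.rev
  | Sum.inr j => Sum.inl j.rev

/-- Graded equivalence of two gradings on `Ã_{p,p}`. -/
def gradedEquivA (p : ℕ) (d₁ d₂ : Fin p ⊕ Fin p → ℤ) : Prop :=
  ∃ r : ZMod (p + p) → ℤ, ∀ a, d₂ a = d₁ a + (r (tgtA p p a) - r (srcA p p a))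

lemma wt_sigma' (p : ℕ) (d : Fin p ⊕ Fin p → ℤ) :
    wtA p p (d ∘ sigmaA p) = - wtA p p d := by
  simp only [wtA, sigmaA, Function.comp]
  have h1 : ∑ x : Fin p, d (Sum.inr x.rev) = ∑ x : Fin p, d (Sum.inr x) :=
    Fintype.sum_equiv Fin.revPerm _ _ (fun _ => rfl)
  have h2 : ∑ x : Fin p, d (Sum.inl x.rev) = ∑ x : Fin p, d (Sum.inl x) :=
    Fintype.sum_equiv Fin.revPerm _ _ (fun _ => rfl)
  rw [h1, h2]
  ring

lemma wt_eq_of_equiv' (p : ℕ) (d₁ d₂ : Fin p ⊕ Fin p → ℤ)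
    (h : gradedEquivA p d₁ d₂) : wtA p p d₂ = wtA p p d₁ := by
  obtain ⟨r, hr⟩ := h
  set F : ℕ → ℤ := fun n => r ((n : ℕ) : ZMod (p + p)) with hF
  set G : ℕ → ℤ := fun n => r (((p + n : ℕ)) : ZMod (p + p)) with hG
  have ha : ∑ i : Fin p, d₂ (Sum.inl i)
      = (∑ i : Fin p, d₁ (Sum.inl i)) + (F p - F 0) := by
    have : ∀ i : Fin p, d₂ (Sum.inl i) = d₁ (Sum.inl i) + (F ((i:ℕ)+1) - F (i:ℕ)) := by
      intro i; exact hr (Sum.inl i)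
    rw [Finset.sum_congr rfl (fun i _ => this i), Finset.sum_add_distrib]
    congr 1
    rw [Fin.sum_univ_eq_sum_range (fun k => F (k+1) - F k) p, Finset.sum_range_sub]
  have hb : ∑ j : Fin p, d₂ (Sum.inr j)
      = (∑ j : Fin p, d₁ (Sum.inr j)) + (G 0 - G p) := by
    have : ∀ j : Fin p, d₂ (Sum.inr j) = d₁ (Sum.inr j) + (G (j:ℕ) - G ((j:ℕ)+1)) := by
      intro j
      have := hr (Sum.inr j)
      simpa [srcA, tgtA, hG, Nat.add_assoc] using this
    rw [Finset.sum_congr rfl (fun j _ => this j), Finset.sum_add_distrib]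
    congr 1
    have : ∀ k, G k - G (k+1) = -(G (k+1) - G k) := fun k => by ring
    rw [Fin.sum_univ_eq_sum_range (fun k => G k - G (k+1)) p]
    rw [Finset.sum_congr rfl (fun k _ => this k), Finset.sum_neg_distrib,
        Finset.sum_range_sub]
    ring
  have hG0 : G 0 = F p := by simp [hG, hF]
  have hGp : G p = F 0 := by
    have hc : ((p + p : ℕ) : ZMod (p + p)) = ((0 : ℕ) : ZMod (p + p)) := by
      rw [ZMod.natCast_self]; simp
    show r ((p + p : ℕ) : ZMod (p + p)) = r ((0 : ℕ) : ZMod (p + p))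
    rw [hc]
  simp only [wtA]
  rw [ha, hb, hG0, hGp]
  ring

lemma equiv_of_wt_eq' (p : ℕ) (hp : 1 ≤ p) (d₁ d₂ : Fin p ⊕ Fin p → ℤ)
    (h : wtA p p d₁ = wtA p p d₂) : gradedEquivA p d₁ d₂ := by
  haveI : NeZero (p + p) := ⟨by omega⟩
  set e : Fin p ⊕ Fin p → ℤ := fun a => d₂ a - d₁ a with he
  have hw : (∑ i : Fin p, e (Sum.inl i)) = ∑ j : Fin p, e (Sum.inr j) := by
    simp only [wtA] at h
    simp only [he, Finset.sum_sub_distrib]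
    linarith
  set ea : ℕ → ℤ := fun k => if hk : k < p then e (Sum.inl ⟨k, hk⟩) else 0 with hea
  set eb : ℕ → ℤ := fun k => if hk : k < p then e (Sum.inr ⟨k, hk⟩) else 0 with heb
  have hsa : ∑ k ∈ Finset.range p, ea k = ∑ i : Fin p, e (Sum.inl i) := by
    rw [← Fin.sum_univ_eq_sum_range ea p]
    exact Finset.sum_congr rfl (fun i _ => by simp [hea, i.isLt])
  have hsb : ∑ k ∈ Finset.range p, eb k = ∑ j : Fin p, e (Sum.inr j) := by
    rw [← Fin.sum_univ_eq_sum_range eb p]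
    exact Finset.sum_congr rfl (fun j _ => by simp [heb, j.isLt])
  set R : ℕ → ℤ := fun n =>
    (∑ k ∈ Finset.range n, ea k) - ∑ j ∈ Finset.range (n - p), eb j with hR
  refine ⟨fun v => R v.val, ?_⟩
  rintro (i | j)
  · have hv1 : (((((i:ℕ) + 1 : ℕ)) : ZMod (p + p)).val) = (i:ℕ) + 1 := by
      rw [ZMod.val_natCast]; exact Nat.mod_eq_of_lt (by omega)
    have hv0 : ((((i:ℕ) : ℕ) : ZMod (p + p)).val) = (i:ℕ) := by
      rw [ZMod.val_natCast]; exact Nat.mod_eq_of_lt (by omega)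
    simp only [srcA, tgtA, hv1, hv0, hR]
    rw [Finset.sum_range_succ]
    have h1 : (i:ℕ) + 1 - p = 0 := by omega
    have h2 : (i:ℕ) - p = 0 := by omega
    rw [h1, h2]
    have hthis : ea (i:ℕ) = e (Sum.inl i) := by simp [hea, i.isLt]
    simp only [Nat.zero_sub, Finset.range_zero, Finset.sum_empty]
    have h3 : e (Sum.inl i) = d₂ (Sum.inl i) - d₁ (Sum.inl i) := rfl
    linarith [hthis, h3]
  · have hvt : ((((p + (j:ℕ) : ℕ)) : ZMod (p + p)).val) = p + (j:ℕ) := by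
      rw [ZMod.val_natCast]; exact Nat.mod_eq_of_lt (by omega)
    have hebj : eb (j:ℕ) = e (Sum.inr j) := by simp [heb, j.isLt]
    rcases lt_or_eq_of_le (Nat.succ_le_of_lt j.isLt) with hj | hj
    · -- j + 1 < p
      have hvs : ((((p + (j:ℕ) + 1 : ℕ)) : ZMod (p + p)).val) = p + (j:ℕ) + 1 := by
        rw [ZMod.val_natCast]; exact Nat.mod_eq_of_lt (by omega)
      simp only [srcA, tgtA, hvt, hvs, hR]
      rw [show p + (j:ℕ) + 1 = (p + (j:ℕ)) + 1 from rfl, Finset.sum_range_succ]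
      have h1 : p + (j:ℕ) + 1 - p = (j:ℕ) + 1 := by omega
      have h2 : p + (j:ℕ) - p = (j:ℕ) := by omega
      rw [h1, h2, Finset.sum_range_succ]
      have hzero : ea (p + (j:ℕ)) = 0 := by
        simp only [hea]; exact dif_neg (by omega)
      have : e (Sum.inr j) = d₂ (Sum.inr j) - d₁ (Sum.inr j) := rfl
      rw [hzero] at *
      linarith [hebj, this]
    · -- j + 1 = p, source vertex is 0
      have hvs : ((((p + (j:ℕ) + 1 : ℕ)) : ZMod (p + p)).val) = 0 := by
        have : p + (j:ℕ) + 1 = p + p := by omega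
        rw [this]; simp [ZMod.natCast_self]
      simp only [srcA, tgtA, hvt, hvs, hR]
      have hRa : ∑ k ∈ Finset.range (p + (j:ℕ)), ea k = ∑ k ∈ Finset.range p, ea k := by
        refine (Finset.sum_subset (Finset.range_subset_range.2 (by omega)) ?_).symm
        intro x _ hx
        simp only [Finset.mem_range, not_lt] at hx
        simp [hea]; omega
      have h2 : p + (j:ℕ) - p = (j:ℕ) := by omega
      have hsplit : ∑ k ∈ Finset.range p, eb k
          = (∑ k ∈ Finset.range (j:ℕ), eb k) + eb (j:ℕ) := by
        conv_lhs => rw [← hj]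
        rw [Finset.sum_range_succ]
      rw [h2, hRa, hsa, hw, ← hsb, hsplit]
      have : e (Sum.inr j) = d₂ (Sum.inr j) - d₁ (Sum.inr j) := rfl
      simp only [Nat.zero_sub, Finset.range_zero, Finset.sum_empty]
      linarith [hebj, this]

/-- composing a grading on `Ã_{p,p}` with the automorphism `σ` negates
the weight; consequently two gradings are equivalent up to an automorphism of the
quiver iff their weights have the same absolute value. -/
theorem weight_automorphism_abs (p : ℕ) (hp : 1 ≤ p) :
    (∀ d : Fin p ⊕ Fin p → ℤ, wtA p p (d ∘ sigmaA p) = - wtA p p d) ∧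
    (∀ d₁ d₂ : Fin p ⊕ Fin p → ℤ,
      (gradedEquivA p d₁ d₂ ∨ gradedEquivA p d₁ (d₂ ∘ sigmaA p)) ↔
        |wtA p p d₁| = |wtA p p d₂|) := by
  refine ⟨wt_sigma' p, fun d₁ d₂ => ?_⟩
  constructor
  · rintro (h | h)
    · rw [wt_eq_of_equiv' p d₁ d₂ h]
    · have h1 := wt_eq_of_equiv' p d₁ _ h
      rw [wt_sigma'] at h1
      rw [← h1, abs_neg]
  · intro h
    rw [abs_eq_abs] at h
    rcases h with h | h
    · exact Or.inl (equiv_of_wt_eq' p hp d₁ d₂ h)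
    · refine Or.inr (equiv_of_wt_eq' p hp d₁ _ ?_)
      rw [wt_sigma', h]
end
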